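/- Let A and B be commutative rings with identity and f : A → B a ring homomorphism whose kernel is contained in the nilradical of A. Then for every prime ideal P of A there exists a prime ideal Q of B such that f⁻¹(Q) ⊆ P. -/
import Mathlib

theorem stmt_0 {A B : Type*} [CommRing A] [CommRing B] (f : A →+* B)
    (hker : (RingHom.ker f : Ideal A) ≤ nilradical A) :
    ∀ P : Ideal A, P.IsPrime → ∃ Q : Ideal B, Q.IsPrime ∧ Q.comap f ≤ P := by
  intro P hP
  let S : Submonoid B := Submonoid.map f P.primeCompl
  have h0 : Disjoint ((⊥ : Ideal B) : Set B) (S : Set B) := by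
    rw [Set.disjoint_left]
    rintro x hx ⟨a, ha, rfl⟩
    simp only [SetLike.mem_coe, Ideal.mem_bot] at hx
    obtain ⟨n, hn⟩ := hker hx
    exact ha (hP.mem_of_pow_mem n (show a ^ n ∈ P by rw [hn]; exact P.zero_mem))
  obtain ⟨Q, hQ, -, hdisj⟩ := Ideal.exists_le_prime_disjoint ⊥ S h0
  refine ⟨Q, hQ, fun x hx => ?_⟩
  by_contra hxP
  exact Set.disjoint_left.mp hdisj hx ⟨x, hxP, rfl⟩
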